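/- Theorem 2 (second part, strict inequality): if N ≥ 2, all amplitudes are nonnegative (u i ≥ 0 for all i), and the squared amplitudes are not all equal (there exist i, j with (u i)² ≠ (u j)²), then for any two distinct positions w ≠ w' we have E[X_w² · X_{w'}⁴] < m₂ · m₄. -/

import Mathlib

/-- Expectation of a real-valued random variable on the finite probability space
`Equiv.Perm (Fin N)` equipped with the uniform probability measure. -/
noncomputable def permExpect (N : ℕ) (f : Equiv.Perm (Fin N) → ℝ) : ℝ :=
  (∑ σ : Equiv.Perm (Fin N), f σ) / (Fintype.card (Equiv.Perm (Fin N)) : ℝ)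

/-- Empirical `k`-th moment of the amplitude block `u`. -/
noncomputable def empMoment (N : ℕ) (u : Fin N → ℝ) (k : ℕ) : ℝ :=
  (1 / (N : ℝ)) * ∑ i : Fin N, (u i) ^ k

open Finset

lemma exists_perm_two {N : ℕ} {i j i' j' : Fin N} (hij : i ≠ j) (hij' : i' ≠ j') :
    ∃ τ : Equiv.Perm (Fin N), τ i = i' ∧ τ j = j' := by
  set k := Equiv.swap i i' j with hk
  have hki' : k ≠ i' := by
    rcases eq_or_ne j i' with h | h
    · have hii' : i ≠ i' := fun hc => hij (hc.trans h.symm)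
      rw [hk, h, Equiv.swap_apply_right]; exact hii'
    · rw [hk, Equiv.swap_apply_of_ne_of_ne hij.symm h]; exact h
  refine ⟨(Equiv.swap k j') * (Equiv.swap i i'), ?_, ?_⟩
  · simp only [Equiv.Perm.mul_apply, Equiv.swap_apply_left]
    exact Equiv.swap_apply_of_ne_of_ne hki'.symm hij'
  · simp only [Equiv.Perm.mul_apply, ← hk, Equiv.swap_apply_left]

lemma fiber_card_eq {N : ℕ} {w w' : Fin N} (i j i' j' : Fin N)
    (hij : i ≠ j) (hij' : i' ≠ j') :
    (univ.filter fun σ : Equiv.Perm (Fin N) => σ w = i ∧ σ w' = j).card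
      = (univ.filter fun σ : Equiv.Perm (Fin N) => σ w = i' ∧ σ w' = j').card := by
  obtain ⟨τ, hτ1, hτ2⟩ := exists_perm_two hij hij'
  apply Finset.card_bij' (fun σ _ => τ * σ) (fun σ _ => τ⁻¹ * σ)
  · intro σ hσ
    simp only [mem_filter, mem_univ, true_and] at hσ ⊢
    simp [Equiv.Perm.mul_apply, hσ.1, hσ.2, hτ1, hτ2]
  · intro σ hσ
    simp only [mem_filter, mem_univ, true_and] at hσ ⊢
    constructor
    · rw [Equiv.Perm.mul_apply, hσ.1, ← hτ1]; simp
    · rw [Equiv.Perm.mul_apply, hσ.2, ← hτ2]; simp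
  · intro σ _; simp [mul_assoc]
  · intro σ _; simp [mul_assoc]

lemma cheb_identity {N : ℕ} (a b : Fin N → ℝ) :
    ∑ i : Fin N, ∑ j : Fin N, (a i - a j) * (b i - b j)
      = 2 * ((N : ℝ) * ∑ i : Fin N, a i * b i - (∑ i : Fin N, a i) * (∑ i : Fin N, b i)) := by
  have h : ∀ i j : Fin N, (a i - a j) * (b i - b j)
      = (a i * b i + a j * b j) - (a i * b j + a j * b i) := by intros; ring
  simp only [h, Finset.sum_sub_distrib, Finset.sum_add_distrib, Finset.sum_const,
    Finset.card_univ, Fintype.card_fin, nsmul_eq_mul, ← Finset.sum_mul, ← Finset.mul_sum]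
  ring

lemma cheb_strict {N : ℕ} (a b : Fin N → ℝ)
    (hnn : ∀ i j : Fin N, 0 ≤ (a i - a j) * (b i - b j))
    (hex : ∃ i j : Fin N, 0 < (a i - a j) * (b i - b j)) :
    (∑ i : Fin N, a i) * (∑ i : Fin N, b i) < (N : ℝ) * ∑ i : Fin N, a i * b i := by
  obtain ⟨i0, j0, hpos⟩ := hex
  have h : 0 < ∑ i : Fin N, ∑ j : Fin N, (a i - a j) * (b i - b j) := by
    apply Finset.sum_pos' (fun i _ => Finset.sum_nonneg fun j _ => hnn i j)
    exact ⟨i0, mem_univ _, Finset.sum_pos' (fun j _ => hnn i0 j) ⟨j0, mem_univ _, hpos⟩⟩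
  rw [cheb_identity] at h
  linarith


/-- Theorem 2, second part (strict inequality): for nonnegative amplitudes whose squares
are not all equal, for distinct positions `w ≠ w'`, `E[X_w² · X_{w'}⁴] < m₂·m₄`. -/
theorem corr_second_fourth_lt (N : ℕ) (hN : 2 ≤ N) (u : Fin N → ℝ)
    (hpos : ∀ i, 0 ≤ u i)
    (hne : ∃ i j : Fin N, (u i) ^ 2 ≠ (u j) ^ 2)
    (w w' : Fin N) (hww' : w ≠ w') :
    permExpect N (fun σ => (u (σ w)) ^ 2 * (u (σ w')) ^ 4)
      < empMoment N u 2 * empMoment N u 4 := by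
  classical
  set a : Fin N → ℝ := fun i => u i ^ 2 with ha
  set b : Fin N → ℝ := fun i => u i ^ 4 with hb
  set S2 := ∑ i : Fin N, a i with hS2
  set S4 := ∑ i : Fin N, b i with hS4
  set S6 := ∑ i : Fin N, a i * b i with hS6
  -- fiber size
  set c : ℕ := (univ.filter fun σ : Equiv.Perm (Fin N) => σ w = w ∧ σ w' = w').card with hc
  have hmaps : ∀ σ ∈ (univ : Finset (Equiv.Perm (Fin N))),
      (σ w, σ w') ∈ (univ : Finset (Fin N)).offDiag := by
    intro σ _
    exact Finset.mem_offDiag.2 ⟨mem_univ _, mem_univ _, fun h => hww' (σ.injective h)⟩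
  -- fiber sums
  have hfibconst : ∀ p ∈ (univ : Finset (Fin N)).offDiag,
      ∑ σ ∈ univ.filter (fun σ : Equiv.Perm (Fin N) => (σ w, σ w') = p),
        a (σ w) * b (σ w') = (c : ℝ) * (a p.1 * b p.2) := by
    intro p hp
    obtain ⟨-, -, hp12⟩ := Finset.mem_offDiag.1 hp
    have heq : (univ.filter fun σ : Equiv.Perm (Fin N) => (σ w, σ w') = p)
        = univ.filter fun σ => σ w = p.1 ∧ σ w' = p.2 := by
      apply Finset.filter_congr; intro σ _; simp [Prod.ext_iff]
    rw [heq]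
    have hcard : (univ.filter fun σ : Equiv.Perm (Fin N) => σ w = p.1 ∧ σ w' = p.2).card = c := by
      rw [hc]; exact fiber_card_eq p.1 p.2 w w' hp12 hww'
    rw [Finset.sum_congr rfl (fun σ hσ => by
      simp only [mem_filter] at hσ; rw [hσ.2.1, hσ.2.2]), Finset.sum_const, hcard,
      nsmul_eq_mul]
  have hT : ∑ σ : Equiv.Perm (Fin N), a (σ w) * b (σ w')
      = (c : ℝ) * ∑ p ∈ (univ : Finset (Fin N)).offDiag, a p.1 * b p.2 := by
    rw [← Finset.sum_fiberwise_of_maps_to hmaps (fun σ => a (σ w) * b (σ w')),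
      Finset.sum_congr rfl hfibconst, Finset.mul_sum]
  have hcardnat : Fintype.card (Equiv.Perm (Fin N)) = (univ : Finset (Fin N)).offDiag.card * c := by
    rw [← Finset.card_univ (α := Equiv.Perm (Fin N)), Finset.card_eq_sum_card_fiberwise hmaps]
    rw [Finset.sum_congr rfl (fun p hp => ?_), Finset.sum_const, smul_eq_mul]
    obtain ⟨-, -, hp12⟩ := Finset.mem_offDiag.1 hp
    have heq : (univ.filter fun σ : Equiv.Perm (Fin N) => (σ w, σ w') = p)
        = univ.filter fun σ => σ w = p.1 ∧ σ w' = p.2 := by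
      apply Finset.filter_congr; intro σ _; simp [Prod.ext_iff]
    rw [heq, hc]
    exact fiber_card_eq p.1 p.2 w w' hp12 hww'
  -- off-diagonal sum
  have hP : ∑ p ∈ (univ : Finset (Fin N)).offDiag, a p.1 * b p.2 = S2 * S4 - S6 := by
    have hsplit : ∑ p ∈ ((univ : Finset (Fin N)).diag ∪ (univ : Finset (Fin N)).offDiag),
        a p.1 * b p.2
        = ∑ p ∈ (univ : Finset (Fin N)).diag, a p.1 * b p.2
          + ∑ p ∈ (univ : Finset (Fin N)).offDiag, a p.1 * b p.2 :=
      Finset.sum_union (Finset.disjoint_diag_offDiag _)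
    rw [Finset.diag_union_offDiag] at hsplit
    have h1 : ∑ p ∈ (univ : Finset (Fin N)) ×ˢ univ, a p.1 * b p.2 = S2 * S4 := by
      rw [Finset.sum_product, hS2, hS4, Finset.sum_mul_sum]
    have h2 : ∑ p ∈ (univ : Finset (Fin N)).diag, a p.1 * b p.2 = S6 :=
      Finset.sum_diag _ (fun p => a p.1 * b p.2)
    linarith [hsplit, h1, h2]
  -- positivity of c
  have hcpos : 0 < c := by
    rw [hc]
    exact Finset.card_pos.2 ⟨1, by simp⟩
  -- counts
  have hNR : (2 : ℝ) ≤ (N : ℝ) := by exact_mod_cast hN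
  have hoffcard : (((univ : Finset (Fin N)).offDiag.card : ℝ)) = (N : ℝ) * ((N : ℝ) - 1) := by
    rw [Finset.offDiag_card, Finset.card_univ, Fintype.card_fin]
    have hle : N ≤ N * N := Nat.le_mul_of_pos_left N (by omega)
    push_cast [Nat.cast_sub hle]
    ring
  -- Chebyshev
  have hkey : ∀ i j : Fin N, (a i - a j) * (b i - b j) = (a i - a j) ^ 2 * (a i + a j) := by
    intro i j; simp only [ha, hb]; ring
  have hnn : ∀ i j : Fin N, 0 ≤ (a i - a j) * (b i - b j) := by
    intro i j; rw [hkey]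
    exact mul_nonneg (sq_nonneg _) (add_nonneg (sq_nonneg _) (sq_nonneg _))
  have hex : ∃ i j : Fin N, 0 < (a i - a j) * (b i - b j) := by
    obtain ⟨i, j, hij⟩ := hne
    refine ⟨i, j, ?_⟩
    rw [hkey]
    have hane : a i ≠ a j := hij
    have h1 : 0 ≤ a i := by simp only [ha]; positivity
    have h2 : 0 ≤ a j := by simp only [ha]; positivity
    have hsum : 0 < a i + a j := by
      rcases lt_or_eq_of_le (add_nonneg h1 h2) with h | h
      · exact h
      · have hi0 : a i = 0 := by linarith
        have hj0 : a j = 0 := by linarith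
        exact absurd (hi0.trans hj0.symm) hane
    have hd : a i - a j ≠ 0 := sub_ne_zero.2 hane
    exact mul_pos (lt_of_le_of_ne (sq_nonneg _) (Ne.symm (pow_ne_zero 2 hd))) hsum
  have hcheb : S2 * S4 < (N : ℝ) * S6 := cheb_strict a b hnn hex
  -- final arithmetic
  have hNpos : (0 : ℝ) < (N : ℝ) := by linarith
  have hcR : (0 : ℝ) < (c : ℝ) := by exact_mod_cast hcpos
  simp only [permExpect, empMoment]
  have hfun : (∑ σ : Equiv.Perm (Fin N), u (σ w) ^ 2 * u (σ w') ^ 4)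
      = ∑ σ : Equiv.Perm (Fin N), a (σ w) * b (σ w') := rfl
  rw [hfun, hT, hP]
  have hden : (Fintype.card (Equiv.Perm (Fin N)) : ℝ) = (c : ℝ) * ((N : ℝ) * ((N : ℝ) - 1)) := by
    rw [hcardnat]; push_cast; rw [hoffcard]; ring
  rw [hden, mul_div_mul_left _ _ (ne_of_gt hcR)]
  have hRHS : 1 / (N : ℝ) * (∑ i : Fin N, u i ^ 2) * (1 / (N : ℝ) * ∑ i : Fin N, u i ^ 4)
      = S2 * S4 / ((N : ℝ) * (N : ℝ)) := by
    rw [hS2, hS4]; field_simp; rfl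
  rw [hRHS, div_lt_div_iff₀ (by nlinarith) (by nlinarith)]
  nlinarith [mul_lt_mul_of_pos_left hcheb hNpos]
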